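/- Let G be a finite connected graph with no cut edges, and let c be an edge of G such that there is no other edge e of G with {c, e} a bond. Then the graph G − c obtained by deleting c is connected and has no cut edges. -/

import Mathlib

/-- A bond of a connected graph `G` is a minimal nonempty set of edges of `G`
whose deletion disconnects `G`: deleting it disconnects `G`, but deleting any
proper subset leaves the graph connected. -/
def SimpleGraph.IsBond {V : Type*} (G : SimpleGraph V) (E' : Set (Sym2 V)) : Prop :=
  E'.Nonempty ∧ E' ⊆ G.edgeSet ∧ ¬ (G.deleteEdges E').Connected ∧
    ∀ F ⊂ E', (G.deleteEdges F).Connected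

private lemma reach_aux {V : Type*} (G : SimpleGraph V) (e : Sym2 V)
    (he : ¬ G.IsBridge e) {u v : V} (p : G.Walk u v) :
    (G.deleteEdges {e}).Reachable u v := by
  induction p with
  | nil => exact SimpleGraph.Reachable.refl _
  | @cons a b w hab p ih =>
    refine SimpleGraph.Reachable.trans ?_ ih
    by_cases hce : s(a, b) = e
    · subst hce
      rw [SimpleGraph.isBridge_iff] at he
      push_neg at he
      exact he
    · exact SimpleGraph.Adj.reachable (by simp [hab, hce])

private lemma connected_deleteEdges_of_not_isBridge {V : Type*} {G : SimpleGraph V}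
    (hG : G.Connected) {e : Sym2 V} (he : ¬ G.IsBridge e) :
    (G.deleteEdges {e}).Connected := by
  rw [SimpleGraph.connected_iff]
  exact ⟨fun u v => (hG.preconnected u v).elim (fun p => reach_aux G e he p), hG.nonempty⟩

/-- If a finite connected graph `G` has no cut edges and `c` is an edge of `G`
such that `{c, e}` is a bond for no other edge `e`, then `G − c` is connected
and has no cut edges. -/
theorem deleteEdge_connected_no_bridges {V : Type*} [Fintype V]
    (G : SimpleGraph V) (hG : G.Connected)
    (hbridge : ∀ e : Sym2 V, ¬ G.IsBridge e)
    (c : Sym2 V) (hc : c ∈ G.edgeSet)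
    (hcType : ∀ e : Sym2 V, e ≠ c → ¬ G.IsBond {c, e}) :
    (G.deleteEdges {c}).Connected ∧
      ∀ e : Sym2 V, ¬ (G.deleteEdges {c}).IsBridge e := by
  have hHc : (G.deleteEdges {c}).Connected :=
    connected_deleteEdges_of_not_isBridge hG (hbridge c)
  refine ⟨hHc, ?_⟩
  intro e
  induction e using Sym2.ind with
  | _ a b =>
  intro hb
  rw [SimpleGraph.isBridge_iff] at hb
  have hnr := hb
  have hab : (G.deleteEdges {c}).Adj a b := by
    by_contra hna
    apply hb
    have hself : (G.deleteEdges {c}).deleteEdges {s(a, b)} = G.deleteEdges {c} := by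
      rw [SimpleGraph.deleteEdges_eq_self, Set.disjoint_singleton_right]
      exact hna
    rw [hself]
    exact hHc.preconnected a b
  rw [SimpleGraph.deleteEdges_adj] at hab
  obtain ⟨heG, hmem⟩ := hab
  have hne : s(a, b) ≠ c := by simpa using hmem
  refine hcType s(a, b) hne ⟨⟨c, by simp⟩, ?_, ?_, ?_⟩
  · rintro x (rfl | rfl)
    · exact hc
    · exact heG
  · intro hcon
    apply hnr
    have : (G.deleteEdges {c}) \ SimpleGraph.fromEdgeSet {s(a, b)}
        = G.deleteEdges {c, s(a, b)} := by
      rw [show (G.deleteEdges {c}) \ SimpleGraph.fromEdgeSet {s(a, b)}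
          = (G.deleteEdges {c}).deleteEdges {s(a, b)} from rfl,
        SimpleGraph.deleteEdges_deleteEdges]
      congr 1
    rw [show (G.deleteEdges {c}).deleteEdges {s(a, b)} = G.deleteEdges {c, s(a, b)} from this]
    exact hcon.preconnected a b
  · intro F hF
    rcases Set.subset_pair_iff_eq.mp hF.subset with rfl | rfl | rfl | rfl
    · simpa using hG
    · exact hHc
    · exact connected_deleteEdges_of_not_isBridge hG (hbridge s(a, b))
    · exact absurd rfl hF.ne
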